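/- Let v : ℝ × ℝ → ℝ, v = v(t,x), be of class C³ (all partial derivatives up to order three exist and mixed partial derivatives commute). Then for all (t,x) one has the pointwise identity v·E = λ(v² + v_x²) + ∂_t( (v² + v_x²)/2 ) + ∂_x( v³ - v² v_{xx} - v v_{tx} + (Γ/2)v_x² - Γ v v_{xx} - (α/2)v² - (β/4)v⁴ - (γ/5)v⁵ - λ v v_x ), where every function is evaluated at (t,x). -/

import Mathlib

/-- Partial derivative with respect to the first (time) variable of a curried
function `v : ℝ → ℝ → ℝ`, `v = v t x`. -/
noncomputable def pt (v : ℝ → ℝ → ℝ) : ℝ → ℝ → ℝ := fun t x => deriv (fun s => v s x) t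

/-- Partial derivative with respect to the second (space) variable of a curried
function `v : ℝ → ℝ → ℝ`, `v = v t x`. -/
noncomputable def px (v : ℝ → ℝ → ℝ) : ℝ → ℝ → ℝ := fun t x => deriv (fun y => v t y) x

/-- Directional derivative in the `x` direction, uncurried. -/
noncomputable def DX (G : ℝ × ℝ → ℝ) : ℝ × ℝ → ℝ := fun p => fderiv ℝ G p (0, 1)

/-- Directional derivative in the `t` direction, uncurried. -/
noncomputable def DT (G : ℝ × ℝ → ℝ) : ℝ × ℝ → ℝ := fun p => fderiv ℝ G p (1, 0)

lemma contDiff_DX {n m : WithTop ℕ∞} {G : ℝ × ℝ → ℝ} (hG : ContDiff ℝ n G)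
    (h : m + 1 ≤ n) : ContDiff ℝ m (DX G) :=
  (hG.fderiv_right h).clm_apply contDiff_const

lemma contDiff_DT {n m : WithTop ℕ∞} {G : ℝ × ℝ → ℝ} (hG : ContDiff ℝ n G)
    (h : m + 1 ≤ n) : ContDiff ℝ m (DT G) :=
  (hG.fderiv_right h).clm_apply contDiff_const

lemma slice_x (G : ℝ × ℝ → ℝ) (t x : ℝ) (h : DifferentiableAt ℝ G (t, x)) :
    HasDerivAt (fun y => G (t, y)) (DX G (t, x)) x := by
  have h1 : HasDerivAt (fun y : ℝ => ((t, y) : ℝ × ℝ)) ((0 : ℝ), (1 : ℝ)) x :=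
    (hasDerivAt_const x t).prodMk (hasDerivAt_id x)
  exact h.hasFDerivAt.comp_hasDerivAt x h1

lemma slice_t (G : ℝ × ℝ → ℝ) (t x : ℝ) (h : DifferentiableAt ℝ G (t, x)) :
    HasDerivAt (fun s => G (s, x)) (DT G (t, x)) t := by
  have h1 : HasDerivAt (fun s : ℝ => ((s, x) : ℝ × ℝ)) ((1 : ℝ), (0 : ℝ)) t :=
    (hasDerivAt_id t).prodMk (hasDerivAt_const t x)
  exact h.hasFDerivAt.comp_hasDerivAt t h1

lemma hasFDerivAt_applied (G : ℝ × ℝ → ℝ) (c : ℝ × ℝ) (p : ℝ × ℝ)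
    (h : DifferentiableAt ℝ (fderiv ℝ G) p) :
    HasFDerivAt (fun q => fderiv ℝ G q c) ((fderiv ℝ (fderiv ℝ G) p).flip c) p := by
  have := h.hasFDerivAt.clm_apply (hasFDerivAt_const c p)
  simpa using this

lemma symm_DT_DX (G : ℝ × ℝ → ℝ) (hG : ContDiff ℝ 2 G) (p : ℝ × ℝ) :
    DT (DX G) p = DX (DT G) p := by
  have hd : DifferentiableAt ℝ (fderiv ℝ G) p :=
    ((hG.fderiv_right (m := 1) (by norm_num)).differentiable (by norm_num)) p
  have h1 := hasFDerivAt_applied G (0, 1) p hd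
  have h2 := hasFDerivAt_applied G (1, 0) p hd
  have hsym : IsSymmSndFDerivAt ℝ G p := hG.contDiffAt.isSymmSndFDerivAt (by simp)
  have e1 : fderiv ℝ (DX G) p = (fderiv ℝ (fderiv ℝ G) p).flip (0, 1) := h1.fderiv
  have e2 : fderiv ℝ (DT G) p = (fderiv ℝ (fderiv ℝ G) p).flip (1, 0) := h2.fderiv
  show fderiv ℝ (DX G) p (1, 0) = fderiv ℝ (DT G) p (0, 1)
  rw [e1, e2]
  simpa using hsym (1, 0) (0, 1)

/-- the differential identity (3.0.2) of the paper. -/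
theorem stmt_1 (lam α β γ Γ : ℝ) (v : ℝ → ℝ → ℝ)
    (hv : ContDiff ℝ 3 (Function.uncurry v)) (t x : ℝ) :
    v t x *
      (pt v t x - px (px (pt v)) t x + 3 * v t x * px v t x
        + lam * (v t x - px (px v) t x)
        - 2 * px v t x * px (px v) t x - v t x * px (px (px v)) t x
        - α * px v t x - β * (v t x) ^ 2 * px v t x - γ * (v t x) ^ 3 * px v t x
        - Γ * px (px (px v)) t x)
    = lam * ((v t x) ^ 2 + (px v t x) ^ 2)
      + deriv (fun s => ((v s x) ^ 2 + (px v s x) ^ 2) / 2) t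
      + deriv (fun y =>
          (v t y) ^ 3 - (v t y) ^ 2 * px (px v) t y - v t y * px (pt v) t y
            + (Γ / 2) * (px v t y) ^ 2 - Γ * v t y * px (px v) t y
            - (α / 2) * (v t y) ^ 2 - (β / 4) * (v t y) ^ 4
            - (γ / 5) * (v t y) ^ 5 - lam * v t y * px v t y) x := by
  set F := Function.uncurry v with hF
  have hF3 : ContDiff ℝ 3 F := hv
  have hDXF : ContDiff ℝ 2 (DX F) := contDiff_DX hF3 (by norm_num)
  have hDTF : ContDiff ℝ 2 (DT F) := contDiff_DT hF3 (by norm_num)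
  have hDXX : ContDiff ℝ 1 (DX (DX F)) := contDiff_DX hDXF (by norm_num)
  have hDXT : ContDiff ℝ 1 (DX (DT F)) := contDiff_DX hDTF (by norm_num)
  have hFd : Differentiable ℝ F := hF3.differentiable (by norm_num)
  have hDXFd : Differentiable ℝ (DX F) := hDXF.differentiable (by norm_num)
  have hDTFd : Differentiable ℝ (DT F) := hDTF.differentiable (by norm_num)
  have hDXXd : Differentiable ℝ (DX (DX F)) := hDXX.differentiable one_ne_zero
  have hDXTd : Differentiable ℝ (DX (DT F)) := hDXT.differentiable one_ne_zero
  -- pointwise identification of partial derivatives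
  have e_px : ∀ t x : ℝ, px v t x = DX F (t, x) := fun t x =>
    (slice_x F t x (hFd _)).deriv
  have e_pt : ∀ t x : ℝ, pt v t x = DT F (t, x) := fun t x =>
    (slice_t F t x (hFd _)).deriv
  have e_pxx : ∀ t x : ℝ, px (px v) t x = DX (DX F) (t, x) := by
    intro t x
    have e : (fun y => px v t y) = fun y => DX F (t, y) := funext fun y => e_px t y
    show deriv (fun y => px v t y) x = _
    rw [e]
    exact (slice_x (DX F) t x (hDXFd _)).deriv
  have e_pxt : ∀ t x : ℝ, px (pt v) t x = DX (DT F) (t, x) := by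
    intro t x
    have e : (fun y => pt v t y) = fun y => DT F (t, y) := funext fun y => e_pt t y
    show deriv (fun y => pt v t y) x = _
    rw [e]
    exact (slice_x (DT F) t x (hDTFd _)).deriv
  have e_pxxx : ∀ t x : ℝ, px (px (px v)) t x = DX (DX (DX F)) (t, x) := by
    intro t x
    have e : (fun y => px (px v) t y) = fun y => DX (DX F) (t, y) :=
      funext fun y => e_pxx t y
    show deriv (fun y => px (px v) t y) x = _
    rw [e]
    exact (slice_x (DX (DX F)) t x (hDXXd _)).deriv
  have e_pxxt : ∀ t x : ℝ, px (px (pt v)) t x = DX (DX (DT F)) (t, x) := by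
    intro t x
    have e : (fun y => px (pt v) t y) = fun y => DX (DT F) (t, y) :=
      funext fun y => e_pxt t y
    show deriv (fun y => px (pt v) t y) x = _
    rw [e]
    exact (slice_x (DX (DT F)) t x (hDXTd _)).deriv
  -- derivatives-of-slices as HasDerivAt, at the point (t, x)
  have hA : HasDerivAt (fun y => v t y) (DX F (t, x)) x := slice_x F t x (hFd _)
  have hD : HasDerivAt (fun y => px v t y) (DX (DX F) (t, x)) x := by
    have e : (fun y => px v t y) = fun y => DX F (t, y) := funext fun y => e_px t y
    rw [e]; exact slice_x (DX F) t x (hDXFd _)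
  have hB : HasDerivAt (fun y => px (px v) t y) (DX (DX (DX F)) (t, x)) x := by
    have e : (fun y => px (px v) t y) = fun y => DX (DX F) (t, y) :=
      funext fun y => e_pxx t y
    rw [e]; exact slice_x (DX (DX F)) t x (hDXXd _)
  have hC : HasDerivAt (fun y => px (pt v) t y) (DX (DX (DT F)) (t, x)) x := by
    have e : (fun y => px (pt v) t y) = fun y => DX (DT F) (t, y) :=
      funext fun y => e_pxt t y
    rw [e]; exact slice_x (DX (DT F)) t x (hDXTd _)
  have hAt : HasDerivAt (fun s => v s x) (DT F (t, x)) t := slice_t F t x (hFd _)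
  have hDt : HasDerivAt (fun s => px v s x) (DT (DX F) (t, x)) t := by
    have e : (fun s => px v s x) = fun s => DX F (s, x) := funext fun s => e_px s x
    rw [e]; exact slice_t (DX F) t x (hDXFd _)
  -- the time derivative
  have hT : deriv (fun s => ((v s x) ^ 2 + (px v s x) ^ 2) / 2) t
      = (((2:ℕ):ℝ) * v t x ^ (2-1) * DT F (t, x) + ((2:ℕ):ℝ) * px v t x ^ (2-1) * DT (DX F) (t, x)) / 2 :=
    HasDerivAt.deriv (((hAt.pow 2).add (hDt.pow 2)).div_const 2)
  -- the space derivative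
  have hX : deriv (fun y =>
          (v t y) ^ 3 - (v t y) ^ 2 * px (px v) t y - v t y * px (pt v) t y
            + (Γ / 2) * (px v t y) ^ 2 - Γ * v t y * px (px v) t y
            - (α / 2) * (v t y) ^ 2 - (β / 4) * (v t y) ^ 4
            - (γ / 5) * (v t y) ^ 5 - lam * v t y * px v t y) x
      = (((3:ℕ):ℝ) * v t x ^ (3-1) * DX F (t, x))
        - ((((2:ℕ):ℝ) * v t x ^ (2-1) * DX F (t, x)) * px (px v) t x
            + (v t x) ^ 2 * DX (DX (DX F)) (t, x))
        - (DX F (t, x) * px (pt v) t x + v t x * DX (DX (DT F)) (t, x))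
        + (Γ / 2) * (((2:ℕ):ℝ) * px v t x ^ (2-1) * DX (DX F) (t, x))
        - ((Γ * DX F (t, x)) * px (px v) t x + (Γ * v t x) * DX (DX (DX F)) (t, x))
        - (α / 2) * (((2:ℕ):ℝ) * v t x ^ (2-1) * DX F (t, x))
        - (β / 4) * (((4:ℕ):ℝ) * v t x ^ (4-1) * DX F (t, x))
        - (γ / 5) * (((5:ℕ):ℝ) * v t x ^ (5-1) * DX F (t, x))
        - ((lam * DX F (t, x)) * px v t x + (lam * v t x) * DX (DX F) (t, x)) :=
    HasDerivAt.deriv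
      ((((((((((hA.pow 3).sub ((hA.pow 2).mul hB)).sub (hA.mul hC)).add
        ((hD.pow 2).const_mul (Γ / 2))).sub ((hA.const_mul Γ).mul hB)).sub
        ((hA.pow 2).const_mul (α / 2))).sub ((hA.pow 4).const_mul (β / 4))).sub
        ((hA.pow 5).const_mul (γ / 5))).sub ((hA.const_mul lam).mul hD)))
  have hsym : DT (DX F) (t, x) = DX (DT F) (t, x) :=
    symm_DT_DX F (hF3.of_le (by norm_num)) (t, x)
  rw [hT, hX, e_px, e_pt, e_pxx, e_pxt, e_pxxx, e_pxxt, hsym]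
  push_cast
  ring
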